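/- Let p ∈ [0,1] and define ψ(u) = (p−1)·u + log( p + (1−p)·e^u ) for u ∈ ℝ. Then ψ(u) ≤ u²/8 for all u ∈ ℝ. -/

import Mathlib

open Real

/-- For `p ∈ [0,1]` the function `ψ(u) = (p−1)·u + log(p + (1−p)·eᵘ)` satisfies
`ψ(u) ≤ u²/8` for all `u ∈ ℝ`. -/
theorem psi_le_quarter_sq
    (p : ℝ) (hp : p ∈ Set.Icc (0 : ℝ) 1) (u : ℝ) :
    (p - 1) * u + Real.log (p + (1 - p) * Real.exp u) ≤ u ^ 2 / 8 := by
  obtain ⟨hp0, hp1⟩ := hp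
  set c : ℝ := 1 - p with hc
  clear_value c
  have hc0 : 0 ≤ c := by simp [hc]; linarith
  have hD : ∀ x : ℝ, 0 < p + c * Real.exp x := by
    intro x
    rcases eq_or_lt_of_le hp0 with h | h
    · have : c = 1 := by simp [hc, ← h]
      simpa [← h, this] using Real.exp_pos x
    · have : 0 ≤ c * Real.exp x := mul_nonneg hc0 (Real.exp_pos x).le
      linarith
  -- derivative of the denominator
  have hDdiff : ∀ x : ℝ, HasDerivAt (fun y => p + c * Real.exp y) (c * Real.exp x) x :=
    fun x => ((Real.hasDerivAt_exp x).const_mul c).const_add p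
  -- derivative of ψ
  have hf : ∀ x : ℝ, HasDerivAt (fun y => (p - 1) * y + Real.log (p + c * Real.exp y))
      ((p - 1) + c * Real.exp x / (p + c * Real.exp x)) x := by
    intro x
    have h1 : HasDerivAt (fun y : ℝ => (p - 1) * y) (p - 1) x := by
      simpa using (hasDerivAt_id x).const_mul (p - 1)
    exact h1.add ((hDdiff x).log (hD x).ne')
  -- h = x/4 - ψ'
  set h : ℝ → ℝ := fun x => x / 4 - ((p - 1) + c * Real.exp x / (p + c * Real.exp x)) with hhdef
  have hhderiv : ∀ x : ℝ, HasDerivAt h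
      (1 / 4 - (c * Real.exp x * (p + c * Real.exp x) - c * Real.exp x * (c * Real.exp x)) /
        (p + c * Real.exp x) ^ 2) x := by
    intro x
    have h1 : HasDerivAt (fun y : ℝ => y / 4) (1 / 4) x := by
      simpa using (hasDerivAt_id x).div_const 4
    have h2 : HasDerivAt (fun y : ℝ => c * Real.exp y / (p + c * Real.exp y))
        ((c * Real.exp x * (p + c * Real.exp x) - c * Real.exp x * (c * Real.exp x)) /
          (p + c * Real.exp x) ^ 2) x :=
      ((Real.hasDerivAt_exp x).const_mul c).div (hDdiff x) (hD x).ne'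
    exact h1.sub (h2.const_add (p - 1))
  have hhmono : Monotone h := by
    apply monotone_of_deriv_nonneg (fun x => (hhderiv x).differentiableAt)
    intro x
    rw [(hhderiv x).deriv]
    have hDx := hD x
    have hex := Real.exp_pos x
    rw [sub_nonneg, div_le_iff₀ (by positivity)]
    nlinarith [sq_nonneg (p - c * Real.exp x)]
  have hpc1 : p + c = 1 := by rw [hc]; ring
  have hh0 : h 0 = 0 := by
    simp only [hhdef, Real.exp_zero, mul_one, hpc1, div_one]
    rw [hc]; ring
  -- g = u^2/8 - ψ
  set g : ℝ → ℝ := fun x => x ^ 2 / 8 - ((p - 1) * x + Real.log (p + c * Real.exp x)) with hgdef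
  have hgderiv : ∀ x : ℝ, HasDerivAt g (h x) x := by
    intro x
    have h1 : HasDerivAt (fun y : ℝ => y ^ 2 / 8) (x / 4) x := by
      have := (hasDerivAt_pow 2 x).div_const 8
      refine this.congr_deriv ?_
      ring
    have := h1.sub (hf x)
    exact this
  have hg0 : g 0 = 0 := by
    simp only [hgdef, Real.exp_zero, mul_one, hpc1, Real.log_one, mul_zero]
    ring
  have key : 0 ≤ g u := by
    rcases le_total u 0 with hu | hu
    · have hanti : AntitoneOn g (Set.Iic 0) := by
        apply antitoneOn_of_deriv_nonpos (convex_Iic 0)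
        · exact fun x _ => (hgderiv x).continuousAt.continuousWithinAt
        · exact fun x _ => ((hgderiv x).differentiableAt).differentiableWithinAt
        · intro x hx
          rw [(hgderiv x).deriv]
          rw [interior_Iic] at hx
          have := hhmono (le_of_lt hx)
          rw [hh0] at this
          exact this
      have := hanti (Set.mem_Iic.2 hu) (Set.mem_Iic.2 le_rfl) hu
      rw [hg0] at this
      exact this
    · have hmono : MonotoneOn g (Set.Ici 0) := by
        apply monotoneOn_of_deriv_nonneg (convex_Ici 0)
        · exact fun x _ => (hgderiv x).continuousAt.continuousWithinAt
        · exact fun x _ => ((hgderiv x).differentiableAt).differentiableWithinAt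
        · intro x hx
          rw [(hgderiv x).deriv]
          rw [interior_Ici] at hx
          have := hhmono (le_of_lt hx)
          rw [hh0] at this
          exact this
      have := hmono (Set.mem_Ici.2 le_rfl) (Set.mem_Ici.2 hu) hu
      rw [hg0] at this
      exact this
  have : (p - 1) * u + Real.log (p + c * Real.exp u) ≤ u ^ 2 / 8 := by
    simp only [hgdef] at key
    linarith
  simpa [hc] using this
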